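/- For every f ∈ L²(ℝ, ℂ) one has (1/2)·∬_{ℝ×ℝ} B_{1,0}(p,q) |f(p) − f(q)|² dp dq ≤ (∫_ℝ |f(p)|² dp) · (∫_ℝ B_{1,0}(0,q) dq). -/

import Mathlib

open MeasureTheory Real Filter

/-- The function `L_{T,μ}(p,q)`, extended continuously across `p²+q² = 2μ`. -/
noncomputable def Lfun (T μ p q : ℝ) : ℝ :=
  if p ^ 2 + q ^ 2 = 2 * μ then (1 - Real.tanh ((p ^ 2 - μ) / (2 * T)) ^ 2) / (2 * T)
  else (Real.tanh ((p ^ 2 - μ) / (2 * T)) + Real.tanh ((q ^ 2 - μ) / (2 * T))) /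
    (p ^ 2 + q ^ 2 - 2 * μ)

/-- `B_{T,μ}(p,q) = L_{T,μ}((p+q)/2, (p−q)/2)`. -/
noncomputable def Bfun (T μ p q : ℝ) : ℝ := Lfun T μ ((p + q) / 2) ((p - q) / 2)

/-- `F_{T,μ}(p) = tanh((p²−μ)/(2T))/(p²−μ)`, extended by `1/(2T)` at `p² = μ`. -/
noncomputable def Ffun (T μ p : ℝ) : ℝ :=
  if p ^ 2 = μ then 1 / (2 * T) else Real.tanh ((p ^ 2 - μ) / (2 * T)) / (p ^ 2 - μ)

/-- `a_{T,μ} = (1/(4π)) ∫ B_{T,μ}(0,q) dq`. -/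
noncomputable def aconst (T μ : ℝ) : ℝ := (1 / (4 * Real.pi)) * ∫ q : ℝ, Bfun T μ 0 q

/-- `A_{T,μ}(p) = (1/(4π)) ∫ B_{T,μ}(p,q) dq`. -/
noncomputable def Afun (T μ p : ℝ) : ℝ := (1 / (4 * Real.pi)) * ∫ q : ℝ, Bfun T μ p q


lemma my_Lfun_eval (r s : ℝ) : Lfun 1 0 r s =
    if r^2 + s^2 = 0 then (1 - Real.tanh (r^2/2)^2)/2
    else (Real.tanh (r^2/2) + Real.tanh (s^2/2))/(r^2+s^2) := by
  simp [Lfun]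

lemma my_Lfun_neg (r s : ℝ) : Lfun 1 0 r (-s) = Lfun 1 0 r s := by
  have h : (-s)^2 = s^2 := by ring
  simp only [Lfun, h]


lemma my_hasDerivAt_tanh (x : ℝ) : HasDerivAt Real.tanh (1 - Real.tanh x ^ 2) x := by
  have h := (Real.hasDerivAt_sinh x).div (Real.hasDerivAt_cosh x) (Real.cosh_pos x).ne'
  have heq : (Real.cosh x * Real.cosh x - Real.sinh x * Real.sinh x) / Real.cosh x ^ 2
      = 1 - Real.tanh x ^ 2 := by
    rw [Real.tanh_eq_sinh_div_cosh]
    have h1 := Real.cosh_sq x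
    have h2 := (Real.cosh_pos x).ne'
    field_simp
  have h' : HasDerivAt (fun y => Real.sinh y / Real.cosh y) (1 - Real.tanh x ^ 2) x := heq ▸ h
  exact h'.congr_of_eventuallyEq (by
    filter_upwards with y using Real.tanh_eq_sinh_div_cosh y)

lemma my_sinh_nonneg {x : ℝ} (hx : 0 ≤ x) : 0 ≤ Real.sinh x := by
  have := Real.sinh_strictMono.monotone hx
  rwa [Real.sinh_zero] at this

lemma my_tanh_nonneg {x : ℝ} (hx : 0 ≤ x) : 0 ≤ Real.tanh x := by
  rw [Real.tanh_eq_sinh_div_cosh]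
  exact div_nonneg (my_sinh_nonneg hx) (Real.cosh_pos x).le

lemma my_tanh_le_one (x : ℝ) : Real.tanh x ≤ 1 := by
  rw [Real.tanh_eq_sinh_div_cosh, div_le_one (Real.cosh_pos x)]
  exact (Real.sinh_lt_cosh x).le  -- guess

lemma my_tanh_sq_le_one (x : ℝ) : Real.tanh x ^ 2 ≤ 1 := by
  have h1 := my_tanh_le_one x
  have h2 : -1 ≤ Real.tanh x := by
    have := my_tanh_le_one (-x)
    rw [Real.tanh_neg] at this; linarith
  nlinarith

-- tanh x ≤ x for x ≥ 0
lemma my_tanh_le_self {x : ℝ} (hx : 0 ≤ x) : Real.tanh x ≤ x := by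
  have hmono : Monotone (fun y => y - Real.tanh y) := by
    apply monotone_of_deriv_nonneg
    · exact fun y => (differentiable_id.sub
        (fun y => (my_hasDerivAt_tanh y).differentiableAt) y)
    · intro y
      have : HasDerivAt (fun y => y - Real.tanh y) (1 - (1 - Real.tanh y ^ 2)) y :=
        (hasDerivAt_id y).sub (my_hasDerivAt_tanh y)
      rw [this.deriv]
      nlinarith [my_tanh_sq_le_one y, sq_nonneg (Real.tanh y)]
  have := hmono hx
  simpa using this

lemma my_convexOn_sinh : ConvexOn ℝ (Set.Ici (0:ℝ)) Real.sinh := by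
  apply convexOn_of_deriv2_nonneg (convex_Ici 0) Real.continuous_sinh.continuousOn
      Real.differentiable_sinh.differentiableOn
  · rw [Real.deriv_sinh]
    exact Real.differentiable_cosh.differentiableOn
  · intro x hx
    rw [Function.iterate_succ, Function.iterate_one, Function.comp_apply, Real.deriv_sinh,
      Real.deriv_cosh]
    exact my_sinh_nonneg (le_of_lt (by simpa using hx))

-- d * sinh c ≤ c * sinh d for 0 ≤ c ≤ d
lemma my_sinh_div_mono {c d : ℝ} (hc : 0 ≤ c) (hcd : c ≤ d) :
    d * Real.sinh c ≤ c * Real.sinh d := by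
  rcases eq_or_lt_of_le (hc.trans hcd) with hd | hd
  · have hc0 : c = 0 := le_antisymm (hcd.trans hd.symm.le) hc
    simp [← hd, hc0]
  · have hmem0 : (0:ℝ) ∈ Set.Ici (0:ℝ) := Set.mem_Ici.mpr le_rfl
    have hmemd : d ∈ Set.Ici (0:ℝ) := Set.mem_Ici.mpr (hc.trans hcd)
    have ha : 0 ≤ 1 - c/d := by
      rw [sub_nonneg, div_le_one hd]; exact hcd
    have hb : 0 ≤ c/d := div_nonneg hc hd.le
    have hab : (1 - c/d) + c/d = 1 := by ring
    have := my_convexOn_sinh.2 hmem0 hmemd ha hb hab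
    simp only [smul_eq_mul, mul_zero, zero_add, Real.sinh_zero, mul_zero, add_zero] at this
    have h2 : Real.sinh c ≤ c / d * Real.sinh d := by
      convert this using 2
      · rfl
      · rw [div_mul_cancel₀ c hd.ne']
    calc d * Real.sinh c ≤ d * (c/d * Real.sinh d) := by
          exact mul_le_mul_of_nonneg_left h2 hd.le
      _ = c * Real.sinh d := by field_simp

-- tanh y * x ≤ tanh x * y for 0 ≤ x ≤ y
lemma my_tanh_div_mono {x y : ℝ} (hx : 0 ≤ x) (hxy : x ≤ y) :
    Real.tanh y * x ≤ Real.tanh x * y := by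
  have hkey := my_sinh_div_mono (c := y - x) (d := x + y) (by linarith) (by linarith)
  rw [Real.sinh_sub, Real.sinh_add] at hkey
  rw [Real.tanh_eq_sinh_div_cosh, Real.tanh_eq_sinh_div_cosh, div_mul_eq_mul_div,
    div_mul_eq_mul_div, div_le_div_iff₀ (Real.cosh_pos y) (Real.cosh_pos x)]
  nlinarith [hkey]

-- tanh a + tanh b ≤ 2 tanh ((a+b)/2) for a, b ≥ 0
lemma my_tanh_exp (x : ℝ) :
    Real.tanh x = (Real.exp (2*x) - 1) / (Real.exp (2*x) + 1) := by
  rw [Real.tanh_eq_sinh_div_cosh, Real.sinh_eq, Real.cosh_eq]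
  have h1 : Real.exp (-x) = (Real.exp x)⁻¹ := Real.exp_neg x
  have h2 : Real.exp (2*x) = Real.exp x * Real.exp x := by
    rw [two_mul, Real.exp_add]
  have h3 : Real.exp x ≠ 0 := Real.exp_ne_zero x
  have h4 : Real.exp (2*x) + 1 ≠ 0 := by positivity
  rw [h1, h2]
  field_simp

lemma my_tanh_concave_pt {a b : ℝ} (ha : 0 ≤ a) (hb : 0 ≤ b) :
    Real.tanh a + Real.tanh b ≤ 2 * Real.tanh ((a+b)/2) := by
  set u := Real.exp (2*a) with hu
  set v := Real.exp (2*b) with hv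
  set m := Real.exp (a+b) with hm
  have huv : m^2 = u * v := by
    rw [hu, hv, hm, ← Real.exp_add, sq, ← Real.exp_add]
    ring_nf
  have h1u : 1 ≤ u := Real.one_le_exp (by linarith)
  have h1v : 1 ≤ v := Real.one_le_exp (by linarith)
  have h1m : 1 ≤ m := Real.one_le_exp (by linarith)
  have hpos : (0:ℝ) < u + v + 2*m := by linarith
  have h2m : 2*m ≤ u + v := by nlinarith [sq_nonneg (u - v)]
  have e2 : 2 * ((a+b)/2) = a + b := by ring
  rw [my_tanh_exp a, my_tanh_exp b, my_tanh_exp ((a+b)/2), e2, ← hu, ← hv, ← hm]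
  rw [div_add_div _ _ (by positivity : u+1 ≠ 0) (by positivity : v+1 ≠ 0), ← mul_div_assoc,
    div_le_div_iff₀ (by positivity) (by positivity : (0:ℝ) < m+1)]
  nlinarith [h2m, h1m, huv, mul_le_mul_of_nonneg_left h2m (by linarith : (0:ℝ) ≤ m - 1)]

lemma my_Lfun_le {r s c : ℝ} (h : 2*c^2 ≤ r^2 + s^2) : Lfun 1 0 r s ≤ Lfun 1 0 c c := by
  rw [my_Lfun_eval, my_Lfun_eval]
  have hr : 0 ≤ r^2 := sq_nonneg r
  have hs : 0 ≤ s^2 := sq_nonneg s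
  have hc : 0 ≤ c^2 := sq_nonneg c
  by_cases h1 : r^2 + s^2 = 0
  · have hr0 : r^2 = 0 := by linarith
    have hc0 : c^2 = 0 := by nlinarith
    have hcc : c^2 + c^2 = 0 := by linarith
    rw [if_pos h1, if_pos hcc, hr0, hc0]
  · have hpos : 0 < r^2 + s^2 := lt_of_le_of_ne (by linarith) (Ne.symm h1)
    rw [if_neg h1]
    by_cases h2 : c^2 + c^2 = 0
    · rw [if_pos h2]
      have hc0 : c^2 = 0 := by linarith
      rw [hc0]
      norm_num
      rw [div_le_iff₀ hpos]
      have t1 := my_tanh_le_self (by positivity : (0:ℝ) ≤ r^2/2)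
      have t2 := my_tanh_le_self (by positivity : (0:ℝ) ≤ s^2/2)
      nlinarith
    · rw [if_neg h2]
      have hcpos : 0 < c^2 := lt_of_le_of_ne (by linarith) (by intro hx; exact h2 (by linarith))
      have key1 := my_tanh_concave_pt (by positivity : (0:ℝ) ≤ r^2/2) (by positivity : (0:ℝ) ≤ s^2/2)
      have harg : (r^2/2 + s^2/2)/2 = (r^2+s^2)/4 := by ring
      rw [harg] at key1
      have key2 := my_tanh_div_mono (x := c^2/2) (y := (r^2+s^2)/4)
        (by positivity) (by linarith)
      have tC := my_tanh_nonneg (by positivity : (0:ℝ) ≤ c^2/2)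
      have tM := my_tanh_nonneg (by positivity : (0:ℝ) ≤ (r^2+s^2)/4)
      rw [div_le_div_iff₀ hpos (by linarith : (0:ℝ) < c^2 + c^2)]
      nlinarith [mul_le_mul_of_nonneg_right key1 (le_of_lt hcpos), key2, hpos.le]

lemma my_Bfun_le_right (p q : ℝ) : Bfun 1 0 p q ≤ Bfun 1 0 0 q := by
  unfold Bfun
  have e1 : (0 + q)/2 = q/2 := by ring
  have e2 : (0 - q)/2 = -(q/2) := by ring
  rw [e1, e2, my_Lfun_neg]
  apply my_Lfun_le
  nlinarith [sq_nonneg p, sq_nonneg q, sq_nonneg (p+q), sq_nonneg (p-q)]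

lemma my_Bfun_symm (p q : ℝ) : Bfun 1 0 p q = Bfun 1 0 q p := by
  unfold Bfun
  have e1 : (q + p)/2 = (p+q)/2 := by ring
  have e2 : (q - p)/2 = -((p-q)/2) := by ring
  rw [e1, e2, my_Lfun_neg]

lemma my_Bfun_le_min (p q : ℝ) :
    Bfun 1 0 p q ≤ min (Bfun 1 0 0 p) (Bfun 1 0 0 q) :=
  le_min (by rw [my_Bfun_symm]; exact my_Bfun_le_right q p) (my_Bfun_le_right p q)

lemma my_Bfun_nonneg (p q : ℝ) : 0 ≤ Bfun 1 0 p q := by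
  unfold Bfun
  rw [my_Lfun_eval]
  split_ifs with h
  · have := my_tanh_sq_le_one (((p+q)/2)^2/2)
    linarith
  · have hpos : 0 < ((p+q)/2)^2 + ((p-q)/2)^2 :=
      lt_of_le_of_ne (by positivity) (Ne.symm h)
    apply div_nonneg _ hpos.le
    have t1 := my_tanh_nonneg (by positivity : (0:ℝ) ≤ ((p+q)/2)^2/2)
    have t2 := my_tanh_nonneg (by positivity : (0:ℝ) ≤ ((p-q)/2)^2/2)
    linarith

lemma my_Bfun_le_half (q : ℝ) : Bfun 1 0 0 q ≤ 1/2 := by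
  have h1 : Bfun 1 0 0 q = Bfun 1 0 q 0 := my_Bfun_symm 0 q
  have h2 := my_Bfun_le_right q 0
  have h3 : Bfun 1 0 0 0 = 1/2 := by
    unfold Bfun
    rw [my_Lfun_eval]
    norm_num
  rw [h1]
  rw [h3] at h2
  exact h2

lemma my_Bfun_tail {q : ℝ} (hq : q ≠ 0) : Bfun 1 0 0 q ≤ 4/q^2 := by
  unfold Bfun
  rw [my_Lfun_eval]
  have hq2 : 0 < q^2 := by positivity
  have hcond : ((0+q)/2)^2 + ((0-q)/2)^2 = q^2/2 := by ring
  rw [hcond]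
  rw [if_neg (by positivity)]
  have t1 := my_tanh_le_one (((0+q)/2)^2/2)
  have t2 := my_tanh_le_one (((0-q)/2)^2/2)
  rw [div_le_div_iff₀ (by positivity) hq2]
  nlinarith

lemma my_continuous_tanh : Continuous Real.tanh := by
  have : Real.tanh = fun x => Real.sinh x / Real.cosh x := funext Real.tanh_eq_sinh_div_cosh
  rw [this]
  exact Real.continuous_sinh.div Real.continuous_cosh (fun x => (Real.cosh_pos x).ne')

lemma my_measurable_tanh : Measurable Real.tanh := my_continuous_tanh.measurable

lemma my_Lfun_measurable : Measurable (fun z : ℝ × ℝ => Lfun 1 0 z.1 z.2) := by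
  unfold Lfun
  have m1 : Measurable (fun z : ℝ × ℝ => Real.tanh ((z.1 ^ 2 - 0) / (2 * 1))) := by
    apply my_measurable_tanh.comp
    fun_prop
  have m2 : Measurable (fun z : ℝ × ℝ => Real.tanh ((z.2 ^ 2 - 0) / (2 * 1))) := by
    apply my_measurable_tanh.comp
    fun_prop
  apply Measurable.ite
  · exact measurableSet_eq_fun (by fun_prop) measurable_const
  · exact ((measurable_const.sub (m1.pow_const 2)).div measurable_const)
  · exact (m1.add m2).div (by fun_prop)

lemma my_Bfun_measurable : Measurable (fun z : ℝ × ℝ => Bfun 1 0 z.1 z.2) := by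
  unfold Bfun
  have hm : Measurable (fun z : ℝ × ℝ => (((z.1 + z.2)/2 : ℝ), ((z.1 - z.2)/2 : ℝ))) := by
    fun_prop
  exact my_Lfun_measurable.comp hm

lemma my_h_measurable : Measurable (fun q : ℝ => Bfun 1 0 0 q) := by
  have hm : Measurable (fun q : ℝ => (((0:ℝ), q) : ℝ × ℝ)) :=
    measurable_const.prodMk measurable_id
  have := my_Bfun_measurable.comp hm
  exact this

lemma my_h_integrable : Integrable (fun q : ℝ => Bfun 1 0 0 q) := by
  have hb : ∀ q : ℝ, ‖Bfun 1 0 0 q‖ ≤ 9 * (1 + q^2)⁻¹ := by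
    intro q
    rw [Real.norm_eq_abs, abs_of_nonneg (my_Bfun_nonneg 0 q)]
    rcases le_or_gt (q^2) 8 with h | h
    · have := my_Bfun_le_half q
      have h1 : (0:ℝ) < 1 + q^2 := by positivity
      rw [← div_eq_mul_inv, le_div_iff₀ h1]
      nlinarith
    · have hq : q ≠ 0 := by intro h0; rw [h0] at h; norm_num at h
      have := my_Bfun_tail hq
      have h1 : (0:ℝ) < 1 + q^2 := by positivity
      have h2 : (0:ℝ) < q^2 := by positivity
      rw [← div_eq_mul_inv, le_div_iff₀ h1]
      rw [le_div_iff₀ h2] at this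
      nlinarith
  apply Integrable.mono' (integrable_inv_one_add_sq.const_mul 9)
    my_h_measurable.aestronglyMeasurable
  exact Filter.Eventually.of_forall hb

lemma my_set_bound (f : Lp ℂ 2 (volume : Measure ℝ)) (S : Set ℝ) (hS : volume S ≠ ⊤) :
    ∫⁻ z : ℝ × ℝ in S ×ˢ S, ENNReal.ofReal (‖f z.1 - f z.2‖^2) ≤
      2 * ENNReal.ofReal (∫ p : ℝ, ‖f p‖^2) * volume S := by
  set F : ℝ → ℂ := ⇑f with hF
  have sm : StronglyMeasurable F := Lp.stronglyMeasurable f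
  have hmem : MemLp F 2 volume := Lp.memLp f
  have hNint : Integrable (fun p => ‖F p‖^2) volume := by
    have := hmem.integrable_norm_rpow two_ne_zero ENNReal.ofNat_ne_top
    have h2 : ((2:ENNReal)).toReal = (2:ℝ) := by norm_num
    rw [h2] at this
    apply this.congr
    filter_upwards with x
    rw [← Real.rpow_natCast ‖F x‖ 2]
    norm_num
  have hN0 : (0:ℝ) ≤ ∫ p, ‖F p‖^2 := integral_nonneg (fun p => sq_nonneg _)
  haveI : IsFiniteMeasure (volume.restrict S) :=
    ⟨by rw [Measure.restrict_apply_univ]; exact hS.lt_top⟩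
  set μS := volume.restrict S with hμS
  have hF2S : Integrable (fun p => ‖F p‖^2) μS := hNint.restrict
  have hFS : Integrable F μS := (hmem.restrict S).integrable one_le_two
  have hFSc : Integrable (fun p => (starRingEnd ℂ) (F p)) μS := by
    have : Integrable (fun p => star (F p)) μS := by
      apply Integrable.mono' hFS.norm
        ((continuous_star.comp_stronglyMeasurable sm).aestronglyMeasurable)
      filter_upwards with p
      rw [norm_star]
    exact this
  rw [Measure.volume_eq_prod, ← Measure.prod_restrict]
  have hg1 : Integrable (fun z : ℝ × ℝ => ‖F z.1‖^2) (μS.prod μS) := by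
    have := hF2S.mul_prod (integrable_const (1:ℝ) : Integrable _ μS)
    simpa using this
  have hg2 : Integrable (fun z : ℝ × ℝ => ‖F z.2‖^2) (μS.prod μS) := by
    have := (integrable_const (1:ℝ) : Integrable _ μS).mul_prod hF2S
    simpa using this
  have hcross : Integrable (fun z : ℝ × ℝ => F z.1 * (starRingEnd ℂ) (F z.2)) (μS.prod μS) :=
    hFS.mul_prod hFSc
  have s1 : StronglyMeasurable (fun z : ℝ × ℝ => ‖F z.1 - F z.2‖) :=
    ((sm.comp_measurable measurable_fst).sub (sm.comp_measurable measurable_snd)).norm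
  have hwsm : AEStronglyMeasurable (fun z : ℝ × ℝ => ‖F z.1 - F z.2‖^2) (μS.prod μS) := by
    have : (fun z : ℝ × ℝ => ‖F z.1 - F z.2‖^2)
        = fun z => ‖F z.1 - F z.2‖ * ‖F z.1 - F z.2‖ := by
      funext z; ring
    rw [this]
    exact (s1.mul s1).aestronglyMeasurable
  have hw : Integrable (fun z : ℝ × ℝ => ‖F z.1 - F z.2‖^2) (μS.prod μS) := by
    apply Integrable.mono' ((hg1.const_mul 2).add (hg2.const_mul 2)) hwsm
    filter_upwards with z
    simp only [Pi.add_apply]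
    rw [Real.norm_eq_abs, abs_of_nonneg (by positivity)]
    have h1 := norm_sub_le (F z.1) (F z.2)
    have h2 : (0:ℝ) ≤ ‖F z.1 - F z.2‖ := norm_nonneg _
    have h3 : (0:ℝ) ≤ ‖F z.1‖ := norm_nonneg _
    have h4 : (0:ℝ) ≤ ‖F z.2‖ := norm_nonneg _
    nlinarith [sq_nonneg (‖F z.1‖ - ‖F z.2‖)]
  rw [← ofReal_integral_eq_lintegral_ofReal hw
    (Filter.Eventually.of_forall fun z => sq_nonneg _)]
  have hpt : ∀ z : ℝ × ℝ, ‖F z.1 - F z.2‖^2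
      = ‖F z.1‖^2 + ‖F z.2‖^2 - 2 * (F z.1 * (starRingEnd ℂ) (F z.2)).re := by
    intro z
    have h := Complex.normSq_sub (F z.1) (F z.2)
    simp only [← Complex.sq_norm] at h
    exact h
  have hcross_re : Integrable (fun z : ℝ × ℝ => (F z.1 * (starRingEnd ℂ) (F z.2)).re)
      (μS.prod μS) := by
    have := hcross.re
    simpa using this
  have hIeq : ∫ z : ℝ × ℝ, ‖F z.1 - F z.2‖^2 ∂(μS.prod μS)
      = (∫ z : ℝ × ℝ, ‖F z.1‖^2 ∂(μS.prod μS)) + (∫ z : ℝ × ℝ, ‖F z.2‖^2 ∂(μS.prod μS))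
        - 2 * ∫ z : ℝ × ℝ, (F z.1 * (starRingEnd ℂ) (F z.2)).re ∂(μS.prod μS) := by
    have hadd : Integrable (fun z : ℝ × ℝ => ‖F z.1‖^2 + ‖F z.2‖^2) (μS.prod μS) := by
      exact hg1.add hg2
    rw [integral_congr_ae (Filter.Eventually.of_forall hpt), integral_sub hadd
      (hcross_re.const_mul 2), integral_add hg1 hg2, integral_const_mul]
  have hcross_nonneg : 0 ≤ ∫ z : ℝ × ℝ, (F z.1 * (starRingEnd ℂ) (F z.2)).re ∂(μS.prod μS) := by
    have h1 : ∫ z : ℝ × ℝ, (F z.1 * (starRingEnd ℂ) (F z.2)).re ∂(μS.prod μS)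
        = ((∫ p, F p ∂μS) * (starRingEnd ℂ) (∫ p, F p ∂μS)).re := by
      have h2 := integral_re (μ := μS.prod μS) hcross
      simp only [RCLike.re_to_complex] at h2
      rw [h2, integral_prod_mul F (fun p => (starRingEnd ℂ) (F p)), integral_conj]
    rw [h1, Complex.mul_conj]
    simp [Complex.normSq_nonneg]
  have hsq1 : ∫ z : ℝ × ℝ, ‖F z.1‖^2 ∂(μS.prod μS)
      = (∫ p, ‖F p‖^2 ∂μS) * (μS Set.univ).toReal := by
    have := integral_prod_mul (μ := μS) (ν := μS) (fun p => ‖F p‖^2) (fun _ => (1:ℝ))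
    simpa [Measure.real] using this
  have hsq2 : ∫ z : ℝ × ℝ, ‖F z.2‖^2 ∂(μS.prod μS)
      = (∫ p, ‖F p‖^2 ∂μS) * (μS Set.univ).toReal := by
    have := integral_prod_mul (μ := μS) (ν := μS) (fun _ => (1:ℝ)) (fun p => ‖F p‖^2)
    simp only [one_mul, integral_const, smul_eq_mul, mul_one] at this
    rw [this]
    simp only [Measure.real]
    ring
  have hSle : ∫ p, ‖F p‖^2 ∂μS ≤ ∫ p, ‖F p‖^2 := by
    rw [hμS]
    exact setIntegral_le_integral hNint (Filter.Eventually.of_forall fun p => sq_nonneg _)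
  have hS0 : (0:ℝ) ≤ ∫ p, ‖F p‖^2 ∂μS := integral_nonneg fun p => sq_nonneg _
  have htR : (0:ℝ) ≤ (μS Set.univ).toReal := ENNReal.toReal_nonneg
  have hreal : ∫ z : ℝ × ℝ, ‖F z.1 - F z.2‖^2 ∂(μS.prod μS)
      ≤ 2 * (∫ p, ‖F p‖^2) * (μS Set.univ).toReal := by
    rw [hIeq, hsq1, hsq2]
    nlinarith [mul_le_mul_of_nonneg_right hSle htR]
  have hμSuniv : μS Set.univ = volume S := by
    rw [hμS, Measure.restrict_apply_univ]
  calc ENNReal.ofReal (∫ z : ℝ × ℝ, ‖F z.1 - F z.2‖^2 ∂(μS.prod μS))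
      ≤ ENNReal.ofReal (2 * (∫ p, ‖F p‖^2) * (μS Set.univ).toReal) :=
        ENNReal.ofReal_le_ofReal hreal
    _ = 2 * ENNReal.ofReal (∫ p : ℝ, ‖F p‖^2) * volume S := by
        rw [ENNReal.ofReal_mul (by positivity), ENNReal.ofReal_mul (by norm_num)]
        rw [hμSuniv, ENNReal.ofReal_toReal hS]
        norm_num


theorem Bfun_quadratic_form_bound (f : Lp ℂ 2 (volume : Measure ℝ)) :
    (1 / 2) * ∫⁻ x : ℝ × ℝ, ENNReal.ofReal (Bfun 1 0 x.1 x.2 * ‖f x.1 - f x.2‖ ^ 2) ≤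
      ENNReal.ofReal ((∫ p : ℝ, ‖f p‖ ^ 2) * ∫ q : ℝ, Bfun 1 0 0 q) := by
  have sm : StronglyMeasurable (⇑f : ℝ → ℂ) := Lp.stronglyMeasurable f
  set N : ℝ := ∫ p : ℝ, ‖f p‖^2 with hN
  have hN0 : (0:ℝ) ≤ N := integral_nonneg (fun p => sq_nonneg _)
  set w : ℝ × ℝ → ℝ := fun z => ‖f z.1 - f z.2‖^2 with hw
  have wmeas : Measurable w := by
    have hm := sm.measurable
    fun_prop
  set m : ℝ × ℝ → ℝ := fun z => min (Bfun 1 0 0 z.1) (Bfun 1 0 0 z.2) with hm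
  have hm_meas : Measurable m := by
    apply Measurable.min
    · exact my_h_measurable.comp measurable_fst
    · exact my_h_measurable.comp measurable_snd
  have hm_nonneg : ∀ z : ℝ × ℝ, 0 ≤ m z :=
    fun z => le_min (my_Bfun_nonneg 0 z.1) (my_Bfun_nonneg 0 z.2)
  set G : ℝ × ℝ → ℝ → ENNReal :=
    fun z t => (Set.Ioo (0:ℝ) (m z)).indicator (fun _ => ENNReal.ofReal (w z)) t with hG
  -- Step 1: pointwise bound by min kernel
  have hmono : ∫⁻ x : ℝ × ℝ, ENNReal.ofReal (Bfun 1 0 x.1 x.2 * ‖f x.1 - f x.2‖ ^ 2)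
      ≤ ∫⁻ x : ℝ × ℝ, ENNReal.ofReal (m x * w x) :=
    lintegral_mono fun x => ENNReal.ofReal_le_ofReal
      (mul_le_mul_of_nonneg_right (my_Bfun_le_min x.1 x.2) (sq_nonneg _))
  -- Step 2: layer-cake representation of the min
  have hrep : ∀ z : ℝ × ℝ, ENNReal.ofReal (m z * w z)
      = ∫⁻ t in Set.Ioi (0:ℝ), G z t := by
    intro z
    rw [hG]
    rw [lintegral_indicator measurableSet_Ioo, setLIntegral_const,
      Measure.restrict_apply measurableSet_Ioo,
      Set.inter_eq_left.mpr Set.Ioo_subset_Ioi_self, Real.volume_Ioo, sub_zero,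
      ENNReal.ofReal_mul (hm_nonneg z), mul_comm]
  -- Step 3: swap the two integrals
  have hswap : ∫⁻ z : ℝ × ℝ, ∫⁻ t in Set.Ioi (0:ℝ), G z t
      = ∫⁻ t in Set.Ioi (0:ℝ), ∫⁻ z : ℝ × ℝ, G z t := by
    apply lintegral_lintegral_swap
    have hset : MeasurableSet {zt : (ℝ × ℝ) × ℝ | 0 < zt.2 ∧ zt.2 < m zt.1} := by
      apply MeasurableSet.inter
      · exact measurableSet_lt measurable_const measurable_snd
      · exact measurableSet_lt measurable_snd (hm_meas.comp measurable_fst)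
    have huncurry : Function.uncurry G
        = Set.indicator {zt : (ℝ × ℝ) × ℝ | 0 < zt.2 ∧ zt.2 < m zt.1}
            (fun zt => ENNReal.ofReal (w zt.1)) := by
      funext zt
      simp only [Function.uncurry, hG, Set.indicator_apply, Set.mem_Ioo, Set.mem_setOf_eq]
    rw [huncurry]
    exact (Measurable.indicator
      (ENNReal.measurable_ofReal.comp (wmeas.comp measurable_fst)) hset).aemeasurable
  -- Step 4: per-slice bound
  have hpert : ∀ t : ℝ, t ∈ Set.Ioi (0:ℝ) →
      ∫⁻ z : ℝ × ℝ, G z t ≤ 2 * ENNReal.ofReal N * volume {q : ℝ | t < Bfun 1 0 0 q} := by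
    intro t ht
    rw [Set.mem_Ioi] at ht
    set S : Set ℝ := {q : ℝ | t < Bfun 1 0 0 q} with hS
    have mS : MeasurableSet S := measurableSet_lt measurable_const my_h_measurable
    have hfin : volume S ≠ ⊤ := by
      have hsub : S ⊆ {q : ℝ | t ≤ Bfun 1 0 0 q} := by
        intro q hq
        simp only [hS, Set.mem_setOf_eq] at *
        exact hq.le
      exact ((measure_mono hsub).trans_lt (my_h_integrable.measure_ge_lt_top ht)).ne
    have hptw : ∀ z : ℝ × ℝ, G z t = (S ×ˢ S).indicator (fun z => ENNReal.ofReal (w z)) z := by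
      intro z
      simp only [hG, Set.indicator_apply, Set.mem_Ioo, Set.mem_prod, Set.mem_setOf_eq, hm,
        lt_min_iff]
      exact if_congr (by constructor <;> intro hx <;> [exact hx.2; exact ⟨ht, hx⟩]) rfl rfl
    rw [lintegral_congr hptw, lintegral_indicator (mS.prod mS)]
    exact my_set_bound f S hfin
  -- assemble
  have h_nonneg_ae : 0 ≤ᵐ[volume] fun q : ℝ => Bfun 1 0 0 q :=
    Filter.Eventually.of_forall (fun q => my_Bfun_nonneg 0 q)
  calc (1 / 2) * ∫⁻ x : ℝ × ℝ, ENNReal.ofReal (Bfun 1 0 x.1 x.2 * ‖f x.1 - f x.2‖ ^ 2)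
      ≤ (1 / 2) * ∫⁻ x : ℝ × ℝ, ENNReal.ofReal (m x * w x) := mul_le_mul_right hmono _
    _ = (1 / 2) * ∫⁻ t in Set.Ioi (0:ℝ), ∫⁻ z : ℝ × ℝ, G z t := by
        rw [lintegral_congr hrep, hswap]
    _ ≤ (1 / 2) * ∫⁻ t in Set.Ioi (0:ℝ),
          2 * ENNReal.ofReal N * volume {q : ℝ | t < Bfun 1 0 0 q} := by
        apply mul_le_mul_right
        apply lintegral_mono_ae
        rw [ae_restrict_iff' measurableSet_Ioi]
        filter_upwards with t
        exact fun ht => hpert t ht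
    _ = (1 / 2) * (2 * ENNReal.ofReal N
          * ∫⁻ t in Set.Ioi (0:ℝ), volume {q : ℝ | t < Bfun 1 0 0 q}) := by
        rw [lintegral_const_mul' _ _ (by
          exact ENNReal.mul_ne_top (by norm_num) ENNReal.ofReal_ne_top)]
    _ = (1 / 2) * (2 * ENNReal.ofReal N * ∫⁻ q : ℝ, ENNReal.ofReal (Bfun 1 0 0 q)) := by
        rw [← lintegral_eq_lintegral_meas_lt volume h_nonneg_ae my_h_measurable.aemeasurable]
    _ = (1 / 2) * (2 * ENNReal.ofReal N * ENNReal.ofReal (∫ q : ℝ, Bfun 1 0 0 q)) := by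
        rw [ofReal_integral_eq_lintegral_ofReal my_h_integrable h_nonneg_ae]
    _ = ((1 / 2) * 2) * (ENNReal.ofReal N * ENNReal.ofReal (∫ q : ℝ, Bfun 1 0 0 q)) := by
        ring
    _ = ENNReal.ofReal N * ENNReal.ofReal (∫ q : ℝ, Bfun 1 0 0 q) := by
        have h2 : (1 / 2 : ENNReal) * 2 = 1 := by
          rw [one_div, ENNReal.inv_mul_cancel (by norm_num) (by norm_num)]
        rw [h2, one_mul]
    _ = ENNReal.ofReal (N * ∫ q : ℝ, Bfun 1 0 0 q) := (ENNReal.ofReal_mul hN0).symm
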